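/- For any positive integer k and any real number β with k(β−1)+1 > 0, and stepsizes τ_n = t_n − t_{n−1} of a partition 0 = t_0 < t_1 < ⋯ < t_N = T satisfying τ_n ≤ C (t_n/T)^β τ with τ the maximal stepsize, there is a constant C' (depending on k, β, C, T but not on τ or N) such that ∑_{j=k+1}^{N} τ_j^{k+1} t_j^{−k} ≤ C' τ^k. -/

import Mathlib

/-- Telescoping sum over `Icc (m+1) N`. -/
lemma tele_sum (f : ℕ → ℝ) (m N : ℕ) (h : m ≤ N) :
    ∑ j ∈ Finset.Icc (m + 1) N, (f j - f (j - 1)) = f N - f m := by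
  induction N with
  | zero =>
    have : m = 0 := Nat.le_zero.mp h
    subst this; simp
  | succ n ih =>
    rcases Nat.lt_or_ge m (n + 1) with h1 | h1
    · have hm : m ≤ n := by omega
      rw [Finset.sum_Icc_succ_top (by omega : m + 1 ≤ n + 1), ih hm]
      simp
    · have : m = n + 1 := by omega
      subst this
      rw [Finset.Icc_eq_empty (by omega)]
      simp

/-- Concavity inequality for `rpow` with exponent in `(0,1]`. -/
lemma concave_rpow (p x y : ℝ) (hp0 : 0 < p) (hp1 : p ≤ 1) (hx : 0 ≤ x)
    (hxy : x ≤ y) (hy : 0 < y) :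
    p * y ^ (p - 1) * (y - x) ≤ y ^ p - x ^ p := by
  have hyp : (0:ℝ) < y ^ p := Real.rpow_pos_of_pos hy p
  have hber : (x / y) ^ p ≤ p * (x / y) + (1 - p) := by
    have := Real.geom_mean_le_arith_mean2_weighted (w₁ := p) (w₂ := 1 - p)
      (p₁ := x / y) (p₂ := 1) hp0.le (by linarith)
      (div_nonneg hx hy.le) zero_le_one (by ring)
    simpa using this
  have hxp : (x / y) ^ p * y ^ p = x ^ p := by
    rw [Real.div_rpow hx hy.le, div_mul_cancel₀]
    exact hyp.ne'
  have h2 : x / y * y ^ p = x * y ^ (p - 1) := by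
    rw [Real.rpow_sub hy, Real.rpow_one]
    field_simp
  have h1 : x ^ p ≤ p * (x * y ^ (p - 1)) + (1 - p) * y ^ p := by
    calc x ^ p = (x / y) ^ p * y ^ p := hxp.symm
      _ ≤ (p * (x / y) + (1 - p)) * y ^ p := mul_le_mul_of_nonneg_right hber hyp.le
      _ = p * (x / y * y ^ p) + (1 - p) * y ^ p := by ring
      _ = p * (x * y ^ (p - 1)) + (1 - p) * y ^ p := by rw [h2]
  have hyy : y ^ (p - 1) * y = y ^ p := by
    rw [Real.rpow_sub hy, Real.rpow_one, div_mul_cancel₀ _ hy.ne']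
  have goal' : p * y ^ (p - 1) * (y - x) = p * (y ^ (p - 1) * y) - p * (x * y ^ (p - 1)) := by
    ring
  rw [goal', hyy]
  linarith

/-- Per-term bound from the grading condition. -/
lemma term_bound (k : ℕ) (β C T τ x s : ℝ) (hC : 0 < C) (hT : 0 < T) (hτ : 0 < τ)
    (hx : 0 < x) (hs : 0 ≤ s) (hb : s ≤ C * (x / T) ^ β * τ) :
    s ^ (k + 1) * x ^ (-(k : ℝ)) ≤
      C ^ k * T ^ (-(β * (k : ℝ))) * τ ^ k * (s * x ^ ((k : ℝ) * (β - 1))) := by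
  have hxT : 0 < x / T := div_pos hx hT
  have h1 : s ^ k ≤ (C * (x / T) ^ β * τ) ^ k := pow_le_pow_left₀ hs hb k
  have h2 : (C * (x / T) ^ β * τ) ^ k = C ^ k * (x / T) ^ (β * (k : ℝ)) * τ ^ k := by
    rw [mul_pow, mul_pow, ← Real.rpow_natCast ((x / T) ^ β) k, ← Real.rpow_mul hxT.le]
  have h3 : (x / T) ^ (β * (k : ℝ)) = x ^ (β * (k : ℝ)) * T ^ (-(β * (k : ℝ))) := by
    rw [Real.div_rpow hx.le hT.le, Real.rpow_neg hT.le, div_eq_mul_inv]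
  have h4 : x ^ (β * (k : ℝ)) * x ^ (-(k : ℝ)) = x ^ ((k : ℝ) * (β - 1)) := by
    rw [← Real.rpow_add hx]
    ring_nf
  calc s ^ (k + 1) * x ^ (-(k : ℝ)) = s ^ k * (s * x ^ (-(k : ℝ))) := by ring
    _ ≤ (C * (x / T) ^ β * τ) ^ k * (s * x ^ (-(k : ℝ))) := by
        apply mul_le_mul_of_nonneg_right h1
        positivity
    _ = C ^ k * T ^ (-(β * (k : ℝ))) * τ ^ k * (s * (x ^ (β * (k : ℝ)) * x ^ (-(k : ℝ)))) := by
        rw [h2, h3]; ring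
    _ = C ^ k * T ^ (-(β * (k : ℝ))) * τ ^ k * (s * x ^ ((k : ℝ) * (β - 1))) := by
        rw [h4]

/-- For any positive integer `k` and real `β` with `k(β-1)+1 > 0`, on a graded partition
`0 = t_0 < t_1 < ⋯ < t_N = T` with stepsizes `τ_n = t_n - t_{n-1} ≤ C (t_n/T)^β τ`
(`τ` the maximal stepsize), the sum `∑_{j=k+1}^N τ_j^{k+1} t_j^{-k}` is bounded by `C' τ^k`
with `C'` independent of `τ` and `N`. -/
theorem stmt0 (k : ℕ) (hk : 0 < k) (β C T : ℝ)
    (hβ : (k : ℝ) * (β - 1) + 1 > 0) (hC : 0 < C) (hT : 0 < T) :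
    ∃ C' : ℝ, 0 < C' ∧ ∀ (N : ℕ) (t : ℕ → ℝ) (τ : ℝ), 0 < τ →
      t 0 = 0 → t N = T → (∀ n < N, t n < t (n + 1)) →
      (∀ n, 1 ≤ n → n ≤ N → t n - t (n - 1) ≤ τ) →
      (∀ n, 1 ≤ n → n ≤ N → t n - t (n - 1) ≤ C * (t n / T) ^ β * τ) →
      ∑ j ∈ Finset.Icc (k + 1) N, (t j - t (j - 1)) ^ (k + 1) * (t j) ^ (-(k : ℝ))
        ≤ C' * τ ^ k := by
  set a : ℝ := (k : ℝ) * (β - 1) with ha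
  set p : ℝ := a + 1 with hpdef
  have hp : 0 < p := by rw [hpdef, ha]; linarith
  have hTp : (0:ℝ) < T ^ p := Real.rpow_pos_of_pos hT p
  have hTk : (0:ℝ) < T ^ (-(β * (k : ℝ))) := Real.rpow_pos_of_pos hT _
  refine ⟨C ^ k * T ^ (-(β * (k : ℝ))) * (T ^ p + T ^ p / p), by positivity, ?_⟩
  intro N t τ hτ ht0 htN hstep hτmax hgrade
  have hmono : ∀ i j, i ≤ j → j ≤ N → t i ≤ t j := by
    intro i j hij hjN
    induction j with
    | zero =>
      have : i = 0 := Nat.le_zero.mp hij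
      subst this; exact le_rfl
    | succ n ih =>
      rcases Nat.lt_or_ge i (n + 1) with h1 | h1
      · exact le_trans (ih (by omega) (by omega)) (hstep n (by omega)).le
      · have : i = n + 1 := by omega
        subst this; exact le_rfl
  by_cases hN : k + 1 ≤ N
  swap
  · rw [Finset.Icc_eq_empty (by omega)]
    simp only [Finset.sum_empty]
    positivity
  have htpos : ∀ j, 1 ≤ j → j ≤ N → 0 < t j := by
    intro j h1 h2
    have h01 : t 0 < t 1 := hstep 0 (by omega)
    calc (0:ℝ) = t 0 := ht0.symm
      _ < t 1 := h01
      _ ≤ t j := hmono 1 j h1 h2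
  set K : ℝ := C ^ k * T ^ (-(β * (k : ℝ))) * τ ^ k with hK
  have key : ∀ j ∈ Finset.Icc (k + 1) N,
      (t j - t (j - 1)) ^ (k + 1) * (t j) ^ (-(k : ℝ)) ≤
        K * ((t j - t (j - 1)) * (t j) ^ a) := by
    intro j hj
    rw [Finset.mem_Icc] at hj
    have hj1 : 1 ≤ j := by omega
    have hs : 0 ≤ t j - t (j - 1) := by
      have := hmono (j - 1) j (by omega) hj.2
      linarith
    exact term_bound k β C T τ (t j) (t j - t (j - 1)) hC hT hτ
      (htpos j hj1 hj.2) hs (hgrade j hj1 hj.2)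
  have hsum : ∑ j ∈ Finset.Icc (k + 1) N, (t j - t (j - 1)) * (t j) ^ a
      ≤ T ^ p + T ^ p / p := by
    rcases le_or_gt 0 a with hA | hA
    · -- nonnegative exponent: bound t_j^a ≤ T^a and telescope
      have hTa : (0:ℝ) < T ^ a := Real.rpow_pos_of_pos hT a
      have step : ∀ j ∈ Finset.Icc (k + 1) N,
          (t j - t (j - 1)) * (t j) ^ a ≤ (t j - t (j - 1)) * T ^ a := by
        intro j hj
        rw [Finset.mem_Icc] at hj
        have h1 : 1 ≤ j := by omega
        have hle : t j ≤ T := htN ▸ hmono j N hj.2 le_rfl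
        have hs : 0 ≤ t j - t (j - 1) := by
          have := hmono (j - 1) j (by omega) hj.2
          linarith
        exact mul_le_mul_of_nonneg_left
          (Real.rpow_le_rpow (htpos j h1 hj.2).le hle hA) hs
      calc ∑ j ∈ Finset.Icc (k + 1) N, (t j - t (j - 1)) * (t j) ^ a
          ≤ ∑ j ∈ Finset.Icc (k + 1) N, (t j - t (j - 1)) * T ^ a :=
            Finset.sum_le_sum step
        _ = (∑ j ∈ Finset.Icc (k + 1) N, (t j - t (j - 1))) * T ^ a := by
            rw [Finset.sum_mul]
        _ = (t N - t k) * T ^ a := by rw [tele_sum t k N (by omega)]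
        _ ≤ T * T ^ a := by
            have h0k : 0 ≤ t k := ht0 ▸ hmono 0 k (by omega) (by omega)
            have : t N - t k ≤ T := by rw [htN]; linarith
            exact mul_le_mul_of_nonneg_right this hTa.le
        _ = T ^ p := by
            rw [hpdef, Real.rpow_add hT a 1, Real.rpow_one]; ring
        _ ≤ T ^ p + T ^ p / p := by
            have : 0 < T ^ p / p := div_pos hTp hp
            linarith
    · -- negative exponent: concavity and telescope
      have hple : p ≤ 1 := by rw [hpdef]; linarith
      have step : ∀ j ∈ Finset.Icc (k + 1) N,
          (t j - t (j - 1)) * (t j) ^ a ≤ ((t j) ^ p - (t (j - 1)) ^ p) / p := by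
        intro j hj
        rw [Finset.mem_Icc] at hj
        have h1 : 1 ≤ j := by omega
        have hy : 0 < t j := htpos j h1 hj.2
        have hx0 : 0 ≤ t (j - 1) := ht0 ▸ hmono 0 (j - 1) (by omega) (by omega)
        have hxy : t (j - 1) ≤ t j := hmono (j - 1) j (by omega) hj.2
        have hcon := concave_rpow p (t (j - 1)) (t j) hp hple hx0 hxy hy
        have hpa : p - 1 = a := by rw [hpdef]; ring
        rw [hpa] at hcon
        rw [le_div_iff₀ hp]
        calc (t j - t (j - 1)) * (t j) ^ a * p
            = p * (t j) ^ a * (t j - t (j - 1)) := by ring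
          _ ≤ (t j) ^ p - (t (j - 1)) ^ p := hcon
      calc ∑ j ∈ Finset.Icc (k + 1) N, (t j - t (j - 1)) * (t j) ^ a
          ≤ ∑ j ∈ Finset.Icc (k + 1) N, ((t j) ^ p - (t (j - 1)) ^ p) / p :=
            Finset.sum_le_sum step
        _ = (∑ j ∈ Finset.Icc (k + 1) N, ((t j) ^ p - (t (j - 1)) ^ p)) / p := by
            rw [Finset.sum_div]
        _ = ((t N) ^ p - (t k) ^ p) / p := by
            rw [tele_sum (fun j => (t j) ^ p) k N (by omega)]
        _ ≤ T ^ p / p := by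
            have h0 : 0 ≤ (t k) ^ p := Real.rpow_nonneg
              (ht0 ▸ hmono 0 k (by omega) (by omega)) p
            have hle : (t N) ^ p - (t k) ^ p ≤ T ^ p := by rw [htN]; linarith
            gcongr
        _ ≤ T ^ p + T ^ p / p := by linarith
  calc ∑ j ∈ Finset.Icc (k + 1) N, (t j - t (j - 1)) ^ (k + 1) * (t j) ^ (-(k : ℝ))
      ≤ ∑ j ∈ Finset.Icc (k + 1) N, K * ((t j - t (j - 1)) * (t j) ^ a) :=
        Finset.sum_le_sum key
    _ = K * ∑ j ∈ Finset.Icc (k + 1) N, (t j - t (j - 1)) * (t j) ^ a := by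
        rw [Finset.mul_sum]
    _ ≤ K * (T ^ p + T ^ p / p) := by
        apply mul_le_mul_of_nonneg_left hsum
        positivity
    _ = C ^ k * T ^ (-(β * (k : ℝ))) * (T ^ p + T ^ p / p) * τ ^ k := by
        rw [hK]; ring
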